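/- Let k ≥ 3 be an odd integer. Let X and Y be independent random variables, each uniformly distributed on a k-element alphabet, let Z = 1 if X = Y and Z = 0 otherwise, and set U = (X, Z), V = (Y, Z). Then for every finite-valued random variable Q on the same probability space with I(U ; V | Q) = 0, it holds that H(U | Q) + H(V | Q) ≤ (1 − 1/k) · log((k² − 1)/4). -/

import Mathlib

open MeasureTheory ProbabilityTheory Real
open scoped ENNReal

/-- The probability that the random variable `X` takes the value `x`. -/
noncomputable def pm {Ω S : Type*} [MeasurableSpace Ω] (μ : Measure Ω) (X : Ω → S) (x : S) : ℝ :=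
  (μ (X ⁻¹' {x})).toReal

/-- Shannon entropy (with natural logarithm) of a finite-valued random variable. -/
noncomputable def entH {Ω S : Type*} [MeasurableSpace Ω] [Fintype S]
    (μ : Measure Ω) (X : Ω → S) : ℝ :=
  ∑ x : S, Real.negMulLog (pm μ X x)

/-- Conditional entropy `H(X | Y)`. -/
noncomputable def condEnt {Ω S T : Type*} [MeasurableSpace Ω] [Fintype S] [Fintype T]
    (μ : Measure Ω) (X : Ω → S) (Y : Ω → T) : ℝ :=
  entH μ (fun ω => (X ω, Y ω)) - entH μ Y

/-- Mutual information `I(X ; Y)`. -/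
noncomputable def mutInf {Ω S T : Type*} [MeasurableSpace Ω] [Fintype S] [Fintype T]
    (μ : Measure Ω) (X : Ω → S) (Y : Ω → T) : ℝ :=
  entH μ X + entH μ Y - entH μ (fun ω => (X ω, Y ω))

/-- Conditional mutual information `I(X ; Y | Z)`. -/
noncomputable def condMutInf {Ω S T U : Type*} [MeasurableSpace Ω] [Fintype S] [Fintype T]
    [Fintype U] (μ : Measure Ω) (X : Ω → S) (Y : Ω → T) (Z : Ω → U) : ℝ :=
  entH μ (fun ω => (X ω, Z ω)) + entH μ (fun ω => (Y ω, Z ω))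
    - entH μ (fun ω => ((X ω, Y ω), Z ω)) - entH μ Z

open Real Finset

section gibbs
variable {ι : Type*} [Fintype ι]

lemma gibbs_term {p q : ℝ} (hp : 0 ≤ p) (hq : 0 ≤ q) (h : p ≠ 0 → q ≠ 0) :
    p - (if p = 0 then 0 else q) ≤ p * Real.log (p / q) := by
  rcases eq_or_ne p 0 with h0 | h0
  · simp [h0]
  · simp only [h0, if_false]
    have hp' : 0 < p := lt_of_le_of_ne hp (Ne.symm h0)
    have hq' : 0 < q := lt_of_le_of_ne hq (Ne.symm (h h0))
    have hlog : Real.log (q / p) ≤ q / p - 1 := Real.log_le_sub_one_of_pos (div_pos hq' hp')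
    have h2 : p * Real.log (q / p) ≤ p * (q / p - 1) :=
      mul_le_mul_of_nonneg_left hlog hp
    have h3 : p * (q / p - 1) = q - p := by field_simp
    have h4 : Real.log (p / q) = - Real.log (q / p) := by
      rw [← Real.log_inv]
      congr 1
      rw [inv_div]
    rw [h4]
    nlinarith
end gibbs

section gibbs2
variable {ι : Type*} [Fintype ι]

lemma gibbs_sum_aux (p q : ι → ℝ) (hp : ∀ i, 0 ≤ p i) (hq : ∀ i, 0 ≤ q i)
    (habs : ∀ i, p i ≠ 0 → q i ≠ 0) (hq1 : ∑ i, q i ≤ 1) (hp1 : ∑ i, p i = 1) :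
    1 - ∑ i, (if p i = 0 then 0 else q i) ≤ ∑ i, p i * Real.log (p i / q i) := by
  have h1 : ∑ i, (p i - (if p i = 0 then 0 else q i)) ≤ ∑ i, p i * Real.log (p i / q i) :=
    Finset.sum_le_sum fun i _ => gibbs_term (hp i) (hq i) (habs i)
  rw [Finset.sum_sub_distrib, hp1] at h1
  exact h1

lemma gibbs_ge (p q : ι → ℝ) (hp : ∀ i, 0 ≤ p i) (hq : ∀ i, 0 ≤ q i)
    (habs : ∀ i, p i ≠ 0 → q i ≠ 0) (hq1 : ∑ i, q i ≤ 1) (hp1 : ∑ i, p i = 1) :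
    0 ≤ ∑ i, p i * Real.log (p i / q i) := by
  refine le_trans ?_ (gibbs_sum_aux p q hp hq habs hq1 hp1)
  have : ∑ i, (if p i = 0 then 0 else q i) ≤ ∑ i, q i :=
    Finset.sum_le_sum fun i _ => by split <;> simp [hq i]
  linarith

lemma gibbs_eq (p q : ι → ℝ) (hp : ∀ i, 0 ≤ p i) (hq : ∀ i, 0 ≤ q i)
    (habs : ∀ i, p i ≠ 0 → q i ≠ 0) (hq1 : ∑ i, q i = 1) (hp1 : ∑ i, p i = 1)
    (hD : ∑ i, p i * Real.log (p i / q i) = 0) : ∀ i, p i = q i := by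
  set q' : ι → ℝ := fun i => if p i = 0 then 0 else q i with hq'def
  have hterm : ∀ i ∈ Finset.univ, (0:ℝ) ≤ p i * Real.log (p i / q i) - (p i - q' i) :=
    fun i _ => sub_nonneg.mpr (gibbs_term (hp i) (hq i) (habs i))
  have hq'le : ∀ i ∈ Finset.univ, q' i ≤ q i := fun i _ => by
    simp only [hq'def]; split <;> simp [hq i]
  have hsum : ∑ i, (p i * Real.log (p i / q i) - (p i - q' i)) = ∑ i, q' i - 1 := by
    rw [Finset.sum_sub_distrib, hD, Finset.sum_sub_distrib, hp1]; ring
  have hq'sum_le : ∑ i, q' i ≤ 1 := by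
    rw [← hq1]; exact Finset.sum_le_sum hq'le
  have hzero : ∑ i, (p i * Real.log (p i / q i) - (p i - q' i)) = 0 := by
    have h1 : (0:ℝ) ≤ ∑ i, (p i * Real.log (p i / q i) - (p i - q' i)) :=
      Finset.sum_nonneg hterm
    linarith [hsum, hq'sum_le, h1]
  have hq'sum : ∑ i, q' i = 1 := by linarith [hsum ▸ hzero]
  -- each term is zero
  have heach : ∀ i ∈ Finset.univ, p i * Real.log (p i / q i) - (p i - q' i) = 0 :=
    (Finset.sum_eq_zero_iff_of_nonneg hterm).mp hzero
  -- q' = q pointwise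
  have hqq' : ∀ i ∈ Finset.univ, q i = q' i := by
    have : ∑ i, (q i - q' i) = 0 := by
      rw [Finset.sum_sub_distrib, hq1, hq'sum]; ring
    have h2 := (Finset.sum_eq_zero_iff_of_nonneg
      (fun i _ => sub_nonneg.mpr (hq'le i (Finset.mem_univ i)))).mp this
    exact fun i hi => by linarith [h2 i hi]
  intro i
  rcases eq_or_ne (p i) 0 with h0 | h0
  · have := hqq' i (Finset.mem_univ i)
    simp only [hq'def, h0, if_pos] at this
    simp [h0, this]
  · have heq := heach i (Finset.mem_univ i)
    simp only [hq'def, h0, if_neg h0] at heq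
    -- p i * log (p i / q i) = p i - q i
    have hp' : 0 < p i := lt_of_le_of_ne (hp i) (Ne.symm h0)
    have hq' : 0 < q i := lt_of_le_of_ne (hq i) (Ne.symm (habs i h0))
    by_contra hne
    have hne' : q i / p i ≠ 1 := by
      intro h
      apply hne
      field_simp at h
      linarith
    have hlt : Real.log (q i / p i) < q i / p i - 1 :=
      Real.log_lt_sub_one_of_pos (div_pos hq' hp') hne'
    have h2 : p i * Real.log (q i / p i) < p i * (q i / p i - 1) :=
      mul_lt_mul_of_pos_left hlt hp'
    have h3 : p i * (q i / p i - 1) = q i - p i := by field_simp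
    have h4 : Real.log (p i / q i) = - Real.log (q i / p i) := by
      rw [← Real.log_inv]; congr 1; rw [inv_div]
    rw [h4] at heq
    nlinarith
end gibbs2

section pushw
variable {S S' T' : Type*} [Fintype S] [Fintype S'] [Fintype T']
  [DecidableEq S'] [DecidableEq T']

/-- pushforward of a weight function along `h`. -/
noncomputable def pushw (w : S → ℝ) (h : S → S') (s' : S') : ℝ :=
  ∑ s, if h s = s' then w s else 0

/-- entropy of the pushforward. -/
noncomputable def Hw (w : S → ℝ) (h : S → S') : ℝ :=
  ∑ s', Real.negMulLog (pushw w h s')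

lemma pushw_nonneg {w : S → ℝ} (hw : ∀ s, 0 ≤ w s) (h : S → S') (s' : S') :
    0 ≤ pushw w h s' :=
  Finset.sum_nonneg fun s _ => by split <;> simp [hw s]

lemma sum_pushw (w : S → ℝ) (h : S → S') : ∑ s', pushw w h s' = ∑ s, w s := by
  unfold pushw
  rw [Finset.sum_comm]
  exact Finset.sum_congr rfl fun s _ => by simp

lemma pushw_le_sum {w : S → ℝ} (hw : ∀ s, 0 ≤ w s) (h : S → S') (s' : S') :
    pushw w h s' ≤ ∑ s, w s := by
  rw [← sum_pushw w h]
  exact Finset.single_le_sum (fun t _ => pushw_nonneg hw h t) (Finset.mem_univ s')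

/-- marginalization over the second component. -/
lemma pushw_pair_fst (w : S → ℝ) (f : S → S') (g : S → T') (u : S') :
    ∑ v, pushw w (fun s => (f s, g s)) (u, v) = pushw w f u := by
  unfold pushw
  rw [Finset.sum_comm]
  refine Finset.sum_congr rfl fun s _ => ?_
  simp only [Prod.mk.injEq, ite_and]
  rcases eq_or_ne (f s) u with h1 | h1
  · simp [h1]
  · simp [h1]

lemma pushw_pair_snd (w : S → ℝ) (f : S → S') (g : S → T') (v : T') :
    ∑ u, pushw w (fun s => (f s, g s)) (u, v) = pushw w g v := by
  unfold pushw
  rw [Finset.sum_comm]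
  refine Finset.sum_congr rfl fun s _ => ?_
  simp only [Prod.mk.injEq, ite_and]
  rcases eq_or_ne (g s) v with h1 | h1
  · simp [h1, Finset.sum_ite_eq]
  · simp [h1]

lemma pushw_pair_le_fst {w : S → ℝ} (hw : ∀ s, 0 ≤ w s) (f : S → S') (g : S → T')
    (u : S') (v : T') : pushw w (fun s => (f s, g s)) (u, v) ≤ pushw w f u := by
  rw [← pushw_pair_fst w f g u]
  exact Finset.single_le_sum
    (fun t _ => pushw_nonneg hw _ (u, t)) (Finset.mem_univ v)

lemma pushw_pair_le_snd {w : S → ℝ} (hw : ∀ s, 0 ≤ w s) (f : S → S') (g : S → T')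
    (u : S') (v : T') : pushw w (fun s => (f s, g s)) (u, v) ≤ pushw w g v := by
  rw [← pushw_pair_snd w f g v]
  exact Finset.single_le_sum
    (fun t _ => pushw_nonneg hw _ (t, v)) (Finset.mem_univ u)

end pushw

section mi
variable {S S' T' : Type*} [Fintype S] [Fintype S'] [Fintype T']
  [DecidableEq S'] [DecidableEq T']

lemma mi_identity (w : S → ℝ) (hw : ∀ s, 0 ≤ w s) (f : S → S') (g : S → T') :
    ∑ p : S' × T', pushw w (fun s => (f s, g s)) p *
      Real.log (pushw w (fun s => (f s, g s)) p / (pushw w f p.1 * pushw w g p.2))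
    = Hw w f + Hw w g - Hw w (fun s => (f s, g s)) := by
  set J := pushw w (fun s => (f s, g s)) with hJ
  have hterm : ∀ p : S' × T',
      J p * Real.log (J p / (pushw w f p.1 * pushw w g p.2))
      = J p * Real.log (J p) - J p * Real.log (pushw w f p.1)
        - J p * Real.log (pushw w g p.2) := by
    intro p
    rcases eq_or_ne (J p) 0 with h0 | h0
    · simp [h0]
    · have hJpos : 0 < J p := lt_of_le_of_ne (pushw_nonneg hw _ _) (Ne.symm h0)
      have hPu : 0 < pushw w f p.1 :=
        lt_of_lt_of_le hJpos (by simpa [hJ] using pushw_pair_le_fst hw f g p.1 p.2)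
      have hPv : 0 < pushw w g p.2 :=
        lt_of_lt_of_le hJpos (by simpa [hJ] using pushw_pair_le_snd hw f g p.1 p.2)
      rw [Real.log_div h0 (by positivity), Real.log_mul (ne_of_gt hPu) (ne_of_gt hPv)]
      ring
  rw [Finset.sum_congr rfl fun p _ => hterm p]
  have e1 : ∑ p : S' × T', (J p * Real.log (J p) - J p * Real.log (pushw w f p.1)
      - J p * Real.log (pushw w g p.2))
      = (∑ p : S' × T', J p * Real.log (J p))
        - (∑ p : S' × T', J p * Real.log (pushw w f p.1))
        - (∑ p : S' × T', J p * Real.log (pushw w g p.2)) := by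
    rw [← Finset.sum_sub_distrib, ← Finset.sum_sub_distrib]
  rw [e1]
  have e2 : ∑ p : S' × T', J p * Real.log (J p) = - Hw w (fun s => (f s, g s)) := by
    unfold Hw
    rw [← Finset.sum_neg_distrib]
    exact Finset.sum_congr rfl fun p _ => by simp [Real.negMulLog, hJ]
  have e3 : ∑ p : S' × T', J p * Real.log (pushw w f p.1) = - Hw w f := by
    unfold Hw
    rw [Fintype.sum_prod_type, ← Finset.sum_neg_distrib]
    refine Finset.sum_congr rfl fun u _ => ?_
    have hred : ∀ y : T', J (u, y) * Real.log (pushw w f (u, y).1)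
        = J (u, y) * Real.log (pushw w f u) := fun y => rfl
    rw [Finset.sum_congr rfl fun y _ => hred y, ← Finset.sum_mul]
    rw [show ∑ v, J (u, v) = pushw w f u from pushw_pair_fst w f g u]
    simp [Real.negMulLog]
  have e4 : ∑ p : S' × T', J p * Real.log (pushw w g p.2) = - Hw w g := by
    unfold Hw
    rw [Fintype.sum_prod_type_right, ← Finset.sum_neg_distrib]
    refine Finset.sum_congr rfl fun v _ => ?_
    have hred : ∀ x : S', J (x, v) * Real.log (pushw w g (x, v).2)
        = J (x, v) * Real.log (pushw w g v) := fun x => rfl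
    rw [Finset.sum_congr rfl fun x _ => hred x, ← Finset.sum_mul]
    rw [show ∑ u, J (u, v) = pushw w g v from pushw_pair_snd w f g v]
    simp [Real.negMulLog]
  rw [e2, e3, e4]
  ring

lemma prod_marg_sum_one (w : S → ℝ) (hw1 : ∑ s, w s = 1) (f : S → S') (g : S → T') :
    ∑ p : S' × T', pushw w f p.1 * pushw w g p.2 = 1 := by
  rw [Fintype.sum_prod_type]
  have : ∀ u, ∑ v, pushw w f u * pushw w g v = pushw w f u * ∑ v, pushw w g v := by
    intro u; rw [Finset.mul_sum]
  rw [Finset.sum_congr rfl fun u _ => this u]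
  rw [sum_pushw w g, hw1]
  simp [← Finset.sum_mul, sum_pushw w f, hw1]

lemma mi_nonneg (w : S → ℝ) (hw : ∀ s, 0 ≤ w s) (hw1 : ∑ s, w s = 1)
    (f : S → S') (g : S → T') :
    Hw w (fun s => (f s, g s)) ≤ Hw w f + Hw w g := by
  have := gibbs_ge (fun p : S' × T' => pushw w (fun s => (f s, g s)) p)
    (fun p => pushw w f p.1 * pushw w g p.2)
    (fun p => pushw_nonneg hw _ _)
    (fun p => mul_nonneg (pushw_nonneg hw _ _) (pushw_nonneg hw _ _))
    (fun p hp => by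
      have hJpos : 0 < pushw w (fun s => (f s, g s)) p :=
        lt_of_le_of_ne (pushw_nonneg hw _ _) (Ne.symm hp)
      have hPu : 0 < pushw w f p.1 :=
        lt_of_lt_of_le hJpos (by simpa using pushw_pair_le_fst hw f g p.1 p.2)
      have hPv : 0 < pushw w g p.2 :=
        lt_of_lt_of_le hJpos (by simpa using pushw_pair_le_snd hw f g p.1 p.2)
      positivity)
    (le_of_eq (prod_marg_sum_one w hw1 f g))
    (by rw [show ∑ p : S' × T', pushw w (fun s => (f s, g s)) p = 1 from
          (sum_pushw w _).trans hw1])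
  rw [mi_identity w hw f g] at this
  linarith

lemma mi_eq_indep (w : S → ℝ) (hw : ∀ s, 0 ≤ w s) (hw1 : ∑ s, w s = 1)
    (f : S → S') (g : S → T')
    (h : Hw w f + Hw w g - Hw w (fun s => (f s, g s)) = 0) :
    ∀ u v, pushw w (fun s => (f s, g s)) (u, v) = pushw w f u * pushw w g v := by
  have hD : ∑ p : S' × T', pushw w (fun s => (f s, g s)) p *
      Real.log (pushw w (fun s => (f s, g s)) p / (pushw w f p.1 * pushw w g p.2)) = 0 := by
    rw [mi_identity w hw f g, h]
  have := gibbs_eq (fun p : S' × T' => pushw w (fun s => (f s, g s)) p)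
    (fun p => pushw w f p.1 * pushw w g p.2)
    (fun p => pushw_nonneg hw _ _)
    (fun p => mul_nonneg (pushw_nonneg hw _ _) (pushw_nonneg hw _ _))
    (fun p hp => by
      have hJpos : 0 < pushw w (fun s => (f s, g s)) p :=
        lt_of_le_of_ne (pushw_nonneg hw _ _) (Ne.symm hp)
      have hPu : 0 < pushw w f p.1 :=
        lt_of_lt_of_le hJpos (by simpa using pushw_pair_le_fst hw f g p.1 p.2)
      have hPv : 0 < pushw w g p.2 :=
        lt_of_lt_of_le hJpos (by simpa using pushw_pair_le_snd hw f g p.1 p.2)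
      positivity)
    (prod_marg_sum_one w hw1 f g)
    (by rw [show ∑ p : S' × T', pushw w (fun s => (f s, g s)) p = 1 from
          (sum_pushw w _).trans hw1])
    hD
  exact fun u v => this (u, v)

end mi

section chain
variable {S S' T' : Type*} [Fintype S] [Fintype S'] [Fintype T']
  [DecidableEq S'] [DecidableEq T']

/-- conditional weight given `g = t`. -/
noncomputable def condw (w : S → ℝ) (g : S → T') (t : T') : S → ℝ :=
  fun s => if g s = t then w s / pushw w g t else 0

lemma condw_nonneg {w : S → ℝ} (hw : ∀ s, 0 ≤ w s) (g : S → T') (t : T') (s : S) :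
    0 ≤ condw w g t s := by
  unfold condw
  split
  · exact div_nonneg (hw s) (pushw_nonneg hw g t)
  · exact le_refl 0

lemma sum_condw {w : S → ℝ} (g : S → T') (t : T') (h : pushw w g t ≠ 0) :
    ∑ s, condw w g t s = 1 := by
  unfold condw
  rw [show ∑ s, (if g s = t then w s / pushw w g t else 0)
      = (∑ s, if g s = t then w s else 0) / pushw w g t by
    rw [Finset.sum_div]
    exact Finset.sum_congr rfl fun s _ => by split <;> simp]
  rw [show (∑ s, if g s = t then w s else 0) = pushw w g t from rfl]
  exact div_self h

lemma pushw_condw (w : S → ℝ) (f : S → S') (g : S → T') (t : T') (u : S') :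
    pushw (condw w g t) f u
      = pushw w (fun s => (f s, g s)) (u, t) / pushw w g t := by
  unfold pushw condw
  rw [Finset.sum_div]
  refine Finset.sum_congr rfl fun s _ => ?_
  simp only [Prod.mk.injEq, ite_and]
  rcases eq_or_ne (f s) u with h1 | h1 <;> rcases eq_or_ne (g s) t with h2 | h2 <;>
    simp [h1, h2, pushw]

lemma chain_rule (w : S → ℝ) (hw : ∀ s, 0 ≤ w s) (f : S → S') (g : S → T') :
    Hw w (fun s => (f s, g s)) = Hw w g + ∑ t, pushw w g t * Hw (condw w g t) f := by
  unfold Hw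
  rw [Fintype.sum_prod_type_right, ← Finset.sum_add_distrib]
  refine Finset.sum_congr rfl fun t _ => ?_
  rcases eq_or_ne (pushw w g t) 0 with h0 | h0
  · have hJ0 : ∀ u : S', pushw w (fun s => (f s, g s)) (u, t) = 0 := fun u =>
      le_antisymm (h0 ▸ pushw_pair_le_snd hw f g u t) (pushw_nonneg hw _ _)
    have hc0 : ∀ s, condw w g t s = 0 := fun s => by
      unfold condw; rw [h0]; split <;> simp
    have : ∀ u : S', pushw (condw w g t) f u = 0 := fun u => by
      unfold pushw
      exact Finset.sum_eq_zero fun s _ => by rw [hc0 s]; split <;> rfl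
    simp [hJ0, h0, this]
  · have hkey : ∀ u : S', pushw w (fun s => (f s, g s)) (u, t)
        = pushw w g t * pushw (condw w g t) f u := fun u => by
      rw [pushw_condw w f g t u]
      field_simp
    rw [Finset.sum_congr rfl fun u _ => congrArg Real.negMulLog (hkey u)]
    rw [Finset.sum_congr rfl fun u (_ : u ∈ Finset.univ) =>
      Real.negMulLog_mul (pushw w g t) (pushw (condw w g t) f u)]
    rw [Finset.sum_add_distrib, ← Finset.sum_mul, ← Finset.mul_sum]
    have hsum1 : ∑ u : S', pushw (condw w g t) f u = 1 := by
      rw [sum_pushw]; exact sum_condw g t h0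
    rw [hsum1, one_mul]

lemma ent_le_log_card {U : Type*} [Fintype U] [DecidableEq U] (r : U → ℝ)
    (hr : ∀ u, 0 ≤ r u) (hr1 : ∑ u, r u = 1) :
    ∑ u, Real.negMulLog (r u)
      ≤ Real.log ((Finset.univ.filter (fun u => r u ≠ 0)).card) := by
  set n := (Finset.univ.filter (fun u : U => r u ≠ 0)).card with hn
  have hnpos : 0 < n := by
    rcases Finset.exists_ne_zero_of_sum_ne_zero (by rw [hr1]; norm_num :
        ∑ u : U, r u ≠ 0) with ⟨u, _, hu⟩
    exact Finset.card_pos.mpr ⟨u, Finset.mem_filter.mpr ⟨Finset.mem_univ u, hu⟩⟩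
  have hnne : ((n : ℝ)) ≠ 0 := Nat.cast_ne_zero.mpr hnpos.ne'
  have hqsum : ∑ u : U, (if r u ≠ 0 then (n : ℝ)⁻¹ else 0) = 1 := by
    rw [Finset.sum_ite, Finset.sum_const, Finset.sum_const, ← hn]
    simp only [smul_eq_mul, mul_zero, add_zero, nsmul_eq_mul]
    field_simp
  have hD := gibbs_ge r (fun u => if r u ≠ 0 then (n : ℝ)⁻¹ else 0) hr
    (fun u => by split
                 · positivity
                 · exact le_refl 0)
    (fun u hu => by simp only [hu, ne_eq, not_false_iff, if_true]; positivity)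
    (le_of_eq hqsum) hr1
  have hterm : ∀ u, r u * Real.log (r u / (if r u ≠ 0 then (n : ℝ)⁻¹ else 0))
      = - Real.negMulLog (r u) + r u * Real.log n := by
    intro u
    rcases eq_or_ne (r u) 0 with h0 | h0
    · simp [h0]
    · simp only [h0, ne_eq, not_false_iff, if_true]
      rw [Real.log_div h0 (inv_ne_zero hnne), Real.log_inv]
      simp only [Real.negMulLog]
      ring
  rw [Finset.sum_congr rfl fun u (_ : u ∈ Finset.univ) => hterm u,
    Finset.sum_add_distrib, ← Finset.sum_mul, hr1, one_mul] at hD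
  have : ∑ u, -Real.negMulLog (r u) = -∑ u, Real.negMulLog (r u) := by
    rw [Finset.sum_neg_distrib]
  rw [this] at hD
  linarith
end chain

section eqfn
variable {A T : Type*} [Fintype A] [Fintype T] [DecidableEq A] [DecidableEq T]

/-- the equality function -/
def zf [DecidableEq A] (a b : A) : Fin 2 := if a = b then 1 else 0

lemma zf_eq_one_iff (a b : A) : zf a b = 1 ↔ a = b := by
  unfold zf; split <;> simp_all

lemma zf_eq_zero_iff (a b : A) : zf a b = 0 ↔ a ≠ b := by
  unfold zf; split <;> simp_all

lemma per_t {k : ℕ} (hA : Fintype.card A = k) (hk : Odd k) (hk2 : 3 ≤ k)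
    (v : A × A × T → ℝ) (hv : ∀ s, 0 ≤ v s) (hv1 : ∑ s, v s = 1)
    (hind : ∀ u u', pushw v (fun s : A × A × T =>
        ((s.1, zf s.1 s.2.1), (s.2.1, zf s.1 s.2.1))) (u, u')
      = pushw v (fun s : A × A × T => (s.1, zf s.1 s.2.1)) u
        * pushw v (fun s : A × A × T => (s.2.1, zf s.1 s.2.1)) u') :
    (pushw v (fun s : A × A × T => zf s.1 s.2.1) 1 = 1
      ∧ Hw v (fun s : A × A × T => (s.1, zf s.1 s.2.1))
        + Hw v (fun s : A × A × T => (s.2.1, zf s.1 s.2.1)) ≤ 0)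
    ∨ (pushw v (fun s : A × A × T => zf s.1 s.2.1) 1 = 0
      ∧ Hw v (fun s : A × A × T => (s.1, zf s.1 s.2.1))
        + Hw v (fun s : A × A × T => (s.2.1, zf s.1 s.2.1))
        ≤ Real.log (((k : ℝ) ^ 2 - 1) / 4)) := by
  set PU := pushw v (fun s : A × A × T => (s.1, zf s.1 s.2.1)) with hPU
  set PV := pushw v (fun s : A × A × T => (s.2.1, zf s.1 s.2.1)) with hPV
  set PZ := pushw v (fun s : A × A × T => zf s.1 s.2.1) with hPZ
  set J := pushw v (fun s : A × A × T =>
    ((s.1, zf s.1 s.2.1), (s.2.1, zf s.1 s.2.1))) with hJ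
  -- marginals
  have hPU1 : ∑ a, PU (a, 1) = PZ 1 :=
    pushw_pair_snd v (fun s : A × A × T => s.1) (fun s => zf s.1 s.2.1) 1
  have hPU0 : ∑ a, PU (a, 0) = PZ 0 :=
    pushw_pair_snd v (fun s : A × A × T => s.1) (fun s => zf s.1 s.2.1) 0
  have hPV1 : ∑ a, PV (a, 1) = PZ 1 :=
    pushw_pair_snd v (fun s : A × A × T => s.2.1) (fun s => zf s.1 s.2.1) 1
  have hPV0 : ∑ a, PV (a, 0) = PZ 0 :=
    pushw_pair_snd v (fun s : A × A × T => s.2.1) (fun s => zf s.1 s.2.1) 0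
  have hPZsum : PZ 0 + PZ 1 = 1 := by
    have h := (sum_pushw v (fun s : A × A × T => zf s.1 s.2.1)).trans hv1
    rwa [Fin.sum_univ_two] at h
  have hPZ0 : 0 ≤ PZ 0 := pushw_nonneg hv _ _
  have hPZ1 : 0 ≤ PZ 1 := pushw_nonneg hv _ _
  -- J vanishes off the z-diagonal
  have hJoff : ∀ (a b : A) (z z' : Fin 2), z ≠ z' → J ((a, z), (b, z')) = 0 := by
    intro a b z z' hne
    refine Finset.sum_eq_zero fun s _ => ?_
    rw [if_neg]
    intro hcond
    rw [Prod.ext_iff, Prod.ext_iff, Prod.ext_iff] at hcond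
    exact hne (hcond.1.2.symm.trans hcond.2.2)
  -- dichotomy
  have hdich : PZ 1 * PZ 0 = 0 := by
    have : PZ 1 * PZ 0 = ∑ a, ∑ b, PU (a, 1) * PV (b, 0) := by
      rw [← hPU1, ← hPV0, Finset.sum_mul_sum]
    rw [this]
    refine Finset.sum_eq_zero fun a _ => Finset.sum_eq_zero fun b _ => ?_
    rw [← hind (a, 1) (b, 0)]
    exact hJoff a b 1 0 (by decide)
  rcases mul_eq_zero.mp hdich with hcase | hcase
  · -- PZ 1 = 0 : supports disjoint
    right
    refine ⟨hcase, ?_⟩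
    have hPZ0one : PZ 0 = 1 := by linarith
    have hPU1z : ∀ a, PU (a, 1) = 0 := by
      intro a
      have hle := Finset.single_le_sum (f := fun a => PU (a, 1))
        (fun a _ => pushw_nonneg hv _ _) (Finset.mem_univ a)
      rw [hPU1, hcase] at hle
      exact le_antisymm hle (pushw_nonneg hv _ _)
    have hPV1z : ∀ a, PV (a, 1) = 0 := by
      intro a
      have hle := Finset.single_le_sum (f := fun a => PV (a, 1))
        (fun a _ => pushw_nonneg hv _ _) (Finset.mem_univ a)
      rw [hPV1, hcase] at hle
      exact le_antisymm hle (pushw_nonneg hv _ _)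
    have hJdiag : ∀ a : A, J ((a, 0), (a, 0)) = 0 := by
      intro a
      refine Finset.sum_eq_zero fun s _ => ?_
      rw [if_neg]
      intro hcond
      rw [Prod.ext_iff, Prod.ext_iff, Prod.ext_iff] at hcond
      obtain ⟨⟨h1, h2⟩, ⟨h3, _⟩⟩ := hcond
      rw [zf_eq_zero_iff] at h2
      exact h2 (h1.trans h3.symm)
    -- disjoint supports
    set SX := Finset.univ.filter (fun a : A => PU (a, 0) ≠ 0) with hSX
    set SY := Finset.univ.filter (fun a : A => PV (a, 0) ≠ 0) with hSY
    have hdisj : Disjoint SX SY := by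
      rw [Finset.disjoint_left]
      intro a haX haY
      have h1 := (Finset.mem_filter.mp haX).2
      have h2 := (Finset.mem_filter.mp haY).2
      have := hJdiag a
      rw [hind (a, 0) (a, 0)] at this
      exact h1 (by rcases mul_eq_zero.mp this with h | h; exact h; exact absurd h h2)
    have hcardU : SX.card + SY.card ≤ k := by
      rw [← Finset.card_union_of_disjoint hdisj]
      calc (SX ∪ SY).card ≤ Fintype.card A := Finset.card_le_univ _
        _ = k := hA
    have hSXpos : 1 ≤ SX.card := by
      have : ∑ a, PU (a, 0) ≠ 0 := by rw [hPU0, hPZ0one]; norm_num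
      rcases Finset.exists_ne_zero_of_sum_ne_zero this with ⟨a, _, ha⟩
      exact Finset.card_pos.mpr ⟨a, Finset.mem_filter.mpr ⟨Finset.mem_univ a, ha⟩⟩
    have hSYpos : 1 ≤ SY.card := by
      have : ∑ a, PV (a, 0) ≠ 0 := by rw [hPV0, hPZ0one]; norm_num
      rcases Finset.exists_ne_zero_of_sum_ne_zero this with ⟨a, _, ha⟩
      exact Finset.card_pos.mpr ⟨a, Finset.mem_filter.mpr ⟨Finset.mem_univ a, ha⟩⟩
    -- entropy bounds via support
    have hHU : Hw v (fun s : A × A × T => (s.1, zf s.1 s.2.1))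
        ≤ Real.log SX.card := by
      refine le_trans (ent_le_log_card PU (fun u => pushw_nonneg hv _ _)
        ((sum_pushw v _).trans hv1)) ?_
      have hsub : (Finset.univ.filter (fun u : A × Fin 2 => PU u ≠ 0)).card
          ≤ SX.card := by
        refine Finset.card_le_card_of_injOn Prod.fst ?_ ?_
        · rintro ⟨a, z⟩ hu
          have hz := (Finset.mem_filter.mp hu).2
          fin_cases z
          · exact Finset.mem_filter.mpr ⟨Finset.mem_univ a, hz⟩
          · exact absurd (hPU1z a) hz
        · rintro ⟨a, z⟩ hu ⟨a', z'⟩ hu' hfst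
          simp only at hfst
          subst hfst
          have hz := (Finset.mem_filter.mp hu).2
          have hz' := (Finset.mem_filter.mp hu').2
          have hzz : z = 0 := by
            fin_cases z; rfl; exact absurd (hPU1z a) hz
          have hzz' : z' = 0 := by
            fin_cases z'; rfl; exact absurd (hPU1z a) hz'
          rw [hzz, hzz']
      have hpos : (0:ℝ) < (Finset.univ.filter (fun u : A × Fin 2 => PU u ≠ 0)).card
          ∨ (Finset.univ.filter (fun u : A × Fin 2 => PU u ≠ 0)).card = 0 := by
        rcases Nat.eq_zero_or_pos (Finset.univ.filter
            (fun u : A × Fin 2 => PU u ≠ 0)).card with h | h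
        · exact Or.inr h
        · exact Or.inl (by exact_mod_cast h)
      rcases hpos with h | h
      · exact Real.log_le_log h (by exact_mod_cast hsub)
      · rw [h]
        simp only [Nat.cast_zero, Real.log_zero]
        exact Real.log_natCast_nonneg _
    have hHV : Hw v (fun s : A × A × T => (s.2.1, zf s.1 s.2.1))
        ≤ Real.log SY.card := by
      refine le_trans (ent_le_log_card PV (fun u => pushw_nonneg hv _ _)
        ((sum_pushw v _).trans hv1)) ?_
      have hsub : (Finset.univ.filter (fun u : A × Fin 2 => PV u ≠ 0)).card
          ≤ SY.card := by
        refine Finset.card_le_card_of_injOn Prod.fst ?_ ?_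
        · rintro ⟨a, z⟩ hu
          have hz := (Finset.mem_filter.mp hu).2
          fin_cases z
          · exact Finset.mem_filter.mpr ⟨Finset.mem_univ a, hz⟩
          · exact absurd (hPV1z a) hz
        · rintro ⟨a, z⟩ hu ⟨a', z'⟩ hu' hfst
          simp only at hfst
          subst hfst
          have hz := (Finset.mem_filter.mp hu).2
          have hz' := (Finset.mem_filter.mp hu').2
          have hzz : z = 0 := by
            fin_cases z; rfl; exact absurd (hPV1z a) hz
          have hzz' : z' = 0 := by
            fin_cases z'; rfl; exact absurd (hPV1z a) hz'
          rw [hzz, hzz']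
      rcases Nat.eq_zero_or_pos (Finset.univ.filter
          (fun u : A × Fin 2 => PV u ≠ 0)).card with h | h
      · rw [h]
        simp only [Nat.cast_zero, Real.log_zero]
        exact Real.log_natCast_nonneg _
      · exact Real.log_le_log (by exact_mod_cast h) (by exact_mod_cast hsub)
    -- arithmetic
    have harith : (SX.card : ℝ) * SY.card ≤ ((k : ℝ) ^ 2 - 1) / 4 := by
      obtain ⟨j, hj⟩ := hk
      have hZ : 4 * (SX.card : ℤ) * SY.card ≤ (k : ℤ) ^ 2 - 1 := by
        have hM : (1 : ℤ) ≤ SX.card := by exact_mod_cast hSXpos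
        have hN : (1 : ℤ) ≤ SY.card := by exact_mod_cast hSYpos
        have hMN : (SX.card : ℤ) + SY.card ≤ k := by exact_mod_cast hcardU
        have hjk : (k : ℤ) = 2 * j + 1 := by exact_mod_cast hj
        set M := (SX.card : ℤ)
        set N := (SY.card : ℤ)
        have hd : 0 ≤ ((j : ℤ) - M) * ((j : ℤ) - M + 1) := by
          rcases le_or_gt 0 ((j : ℤ) - M) with h | h
          · positivity
          · have h1 : (j : ℤ) - M + 1 ≤ 0 := by omega
            have h2 : (j : ℤ) - M ≤ 0 := by omega
            nlinarith
        nlinarith [mul_le_mul_of_nonneg_left (by omega : N ≤ (k : ℤ) - M)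
          (by omega : (0:ℤ) ≤ 4 * M)]
      have hR : ((4 * (SX.card : ℤ) * SY.card : ℤ) : ℝ) ≤ (((k : ℤ) ^ 2 - 1 : ℤ) : ℝ) := by
        exact_mod_cast hZ
      push_cast at hR
      linarith
    have hlogmn : Real.log SX.card + Real.log SY.card
        = Real.log ((SX.card : ℝ) * SY.card) := by
      rw [Real.log_mul (Nat.cast_ne_zero.mpr (by omega))
        (Nat.cast_ne_zero.mpr (by omega))]
    have hmnpos : (0:ℝ) < (SX.card : ℝ) * SY.card := by
      have h1 : (0:ℝ) < SX.card := by exact_mod_cast hSXpos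
      have h2 : (0:ℝ) < SY.card := by exact_mod_cast hSYpos
      positivity
    calc Hw v (fun s : A × A × T => (s.1, zf s.1 s.2.1))
        + Hw v (fun s : A × A × T => (s.2.1, zf s.1 s.2.1))
        ≤ Real.log SX.card + Real.log SY.card := add_le_add hHU hHV
      _ = Real.log ((SX.card : ℝ) * SY.card) := hlogmn
      _ ≤ Real.log (((k : ℝ) ^ 2 - 1) / 4) := Real.log_le_log hmnpos harith
  · -- PZ 0 = 0 : everything concentrated on diagonal
    left
    refine ⟨by linarith, ?_⟩
    have hPZ1one : PZ 1 = 1 := by linarith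
    have hPU0z : ∀ a, PU (a, 0) = 0 := by
      intro a
      have hle := Finset.single_le_sum (f := fun a => PU (a, 0))
        (fun a _ => pushw_nonneg hv _ _) (Finset.mem_univ a)
      rw [hPU0, hcase] at hle
      exact le_antisymm hle (pushw_nonneg hv _ _)
    have hPV0z : ∀ a, PV (a, 0) = 0 := by
      intro a
      have hle := Finset.single_le_sum (f := fun a => PV (a, 0))
        (fun a _ => pushw_nonneg hv _ _) (Finset.mem_univ a)
      rw [hPV0, hcase] at hle
      exact le_antisymm hle (pushw_nonneg hv _ _)
    have hJne : ∀ a b : A, a ≠ b → J ((a, 1), (b, 1)) = 0 := by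
      intro a b hne
      refine Finset.sum_eq_zero fun s _ => ?_
      rw [if_neg]
      intro hcond
      rw [Prod.ext_iff, Prod.ext_iff, Prod.ext_iff] at hcond
      obtain ⟨⟨h1, h2⟩, ⟨h3, _⟩⟩ := hcond
      rw [zf_eq_one_iff] at h2
      exact hne ((h1.symm.trans h2).trans h3)
    have hPVU : ∀ a, PV (a, 1) = PU (a, 1) := by
      intro a
      refine Finset.sum_congr rfl fun s _ => ?_
      rcases eq_or_ne s.1 s.2.1 with h | h
      · rcases eq_or_ne s.1 a with h2 | h2
        · rw [if_pos, if_pos] <;> rw [Prod.ext_iff] <;>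
            exact ⟨by simp [← h, h2], by simp [h, h2, zf_eq_one_iff]⟩
        · rw [if_neg, if_neg] <;> rw [Prod.ext_iff] <;> simp only [not_and] <;>
            intro hc
          · exact absurd hc h2
          · exact absurd (h.trans hc) h2
      · rw [if_neg, if_neg] <;> rw [Prod.ext_iff] <;> simp only [not_and] <;>
          intro _ hc
        · rw [zf_eq_one_iff] at hc; exact h hc
        · rw [zf_eq_one_iff] at hc; exact h hc
    -- support of PU is a single point
    have hcard1 : (Finset.univ.filter (fun u : A × Fin 2 => PU u ≠ 0)).card ≤ 1 := by
      rw [Finset.card_le_one]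
      rintro ⟨a, z⟩ ha ⟨b, z'⟩ hb
      have hza := (Finset.mem_filter.mp ha).2
      have hzb := (Finset.mem_filter.mp hb).2
      have hz1 : z = 1 := by fin_cases z; exact absurd (hPU0z a) hza; rfl
      have hz'1 : z' = 1 := by fin_cases z'; exact absurd (hPU0z b) hzb; rfl
      subst hz1; subst hz'1
      by_contra hne
      have hab : a ≠ b := by
        intro h; exact hne (by rw [h])
      have := hJne a b hab
      rw [hind (a, 1) (b, 1), hPVU b] at this
      rcases mul_eq_zero.mp this with h | h
      · exact hza h
      · exact hzb h
    have hcardV1 : (Finset.univ.filter (fun u : A × Fin 2 => PV u ≠ 0)).card ≤ 1 := by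
      rw [Finset.card_le_one]
      rintro ⟨a, z⟩ ha ⟨b, z'⟩ hb
      have hza := (Finset.mem_filter.mp ha).2
      have hzb := (Finset.mem_filter.mp hb).2
      have hz1 : z = 1 := by fin_cases z; exact absurd (hPV0z a) hza; rfl
      have hz'1 : z' = 1 := by fin_cases z'; exact absurd (hPV0z b) hzb; rfl
      subst hz1; subst hz'1
      by_contra hne
      have hab : a ≠ b := by
        intro h; exact hne (by rw [h])
      have := hJne a b hab
      rw [hind (a, 1) (b, 1), ← hPVU a] at this
      rcases mul_eq_zero.mp this with h | h
      · exact hza h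
      · exact hzb h
    have hHU : Hw v (fun s : A × A × T => (s.1, zf s.1 s.2.1)) ≤ 0 := by
      refine le_trans (ent_le_log_card PU (fun u => pushw_nonneg hv _ _)
        ((sum_pushw v _).trans hv1)) ?_
      exact Real.log_nonpos (Nat.cast_nonneg _) (by exact_mod_cast hcard1)
    have hHV : Hw v (fun s : A × A × T => (s.2.1, zf s.1 s.2.1)) ≤ 0 := by
      refine le_trans (ent_le_log_card PV (fun u => pushw_nonneg hv _ _)
        ((sum_pushw v _).trans hv1)) ?_
      exact Real.log_nonpos (Nat.cast_nonneg _) (by exact_mod_cast hcardV1)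
    linarith
end eqfn

section puremain
variable {S T' : Type*} [Fintype S] [Fintype T'] [DecidableEq T']

lemma P_mul_condw (w : S → ℝ) (hw : ∀ s, 0 ≤ w s) (g : S → T') (t : T') (s : S) :
    pushw w g t * condw w g t s = if g s = t then w s else 0 := by
  unfold condw
  rcases eq_or_ne (g s) t with h | h
  · rw [if_pos h, if_pos h]
    rcases eq_or_ne (pushw w g t) 0 with h0 | h0
    · have hws : w s = 0 := by
        have hle : w s ≤ pushw w g t := by
          have : (if g s = t then w s else 0) ≤ pushw w g t :=
            Finset.single_le_sum (f := fun s' => if g s' = t then w s' else 0)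
              (fun s' _ => by split <;> simp [hw s']) (Finset.mem_univ s)
          rwa [if_pos h] at this
        exact le_antisymm (h0 ▸ hle) (hw s)
      rw [hws, h0]
      simp
    · field_simp
  · rw [if_neg h, if_neg h, mul_zero]

end puremain

section main
variable {A T : Type*} [Fintype A] [Fintype T] [DecidableEq A] [DecidableEq T]

lemma pure_main {k : ℕ} (hA : Fintype.card A = k) (hk : Odd k) (hk2 : 3 ≤ k)
    (w : A × A × T → ℝ) (hw : ∀ s, 0 ≤ w s) (hw1 : ∑ s, w s = 1)
    (hmarg : ∀ a b : A, ∑ t, w (a, b, t) = 1 / (k : ℝ) ^ 2)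
    (hcmi : Hw w (fun s : A × A × T => ((s.1, zf s.1 s.2.1), s.2.2))
        + Hw w (fun s : A × A × T => ((s.2.1, zf s.1 s.2.1), s.2.2))
        - Hw w (fun s : A × A × T =>
            (((s.1, zf s.1 s.2.1), (s.2.1, zf s.1 s.2.1)), s.2.2))
        - Hw w (fun s : A × A × T => s.2.2) = 0) :
    (Hw w (fun s : A × A × T => ((s.1, zf s.1 s.2.1), s.2.2))
        - Hw w (fun s : A × A × T => s.2.2))
      + (Hw w (fun s : A × A × T => ((s.2.1, zf s.1 s.2.1), s.2.2))
        - Hw w (fun s : A × A × T => s.2.2))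
      ≤ (1 - 1 / (k : ℝ)) * Real.log (((k : ℝ) ^ 2 - 1) / 4) := by
  have hk0 : (0 : ℝ) < k := by
    have : (3:ℝ) ≤ k := by exact_mod_cast hk2
    linarith
  set g : A × A × T → T := fun s => s.2.2 with hg
  set fu : A × A × T → A × Fin 2 := fun s => (s.1, zf s.1 s.2.1) with hfu
  set fv : A × A × T → A × Fin 2 := fun s => (s.2.1, zf s.1 s.2.1) with hfv
  set P : T → ℝ := pushw w g with hP
  have hPnn : ∀ t, 0 ≤ P t := fun t => pushw_nonneg hw g t
  have hPsum : ∑ t, P t = 1 := (sum_pushw w g).trans hw1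
  -- chain rules
  have hchU : Hw w (fun s => (fu s, g s)) = Hw w g + ∑ t, P t * Hw (condw w g t) fu :=
    chain_rule w hw fu g
  have hchV : Hw w (fun s => (fv s, g s)) = Hw w g + ∑ t, P t * Hw (condw w g t) fv :=
    chain_rule w hw fv g
  have hchUV : Hw w (fun s => ((fu s, fv s), g s))
      = Hw w g + ∑ t, P t * Hw (condw w g t) (fun s => (fu s, fv s)) :=
    chain_rule w hw (fun s => (fu s, fv s)) g
  -- the CMI as a sum of nonnegative terms
  have hsum0 : ∑ t, P t * (Hw (condw w g t) fu + Hw (condw w g t) fv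
      - Hw (condw w g t) (fun s => (fu s, fv s))) = 0 := by
    have : ∑ t, P t * (Hw (condw w g t) fu + Hw (condw w g t) fv
        - Hw (condw w g t) (fun s => (fu s, fv s)))
        = (∑ t, P t * Hw (condw w g t) fu) + (∑ t, P t * Hw (condw w g t) fv)
          - ∑ t, P t * Hw (condw w g t) (fun s => (fu s, fv s)) := by
      rw [← Finset.sum_add_distrib, ← Finset.sum_sub_distrib]
      exact Finset.sum_congr rfl fun t _ => by ring
    rw [this]
    have h1 : Hw w (fun s => (fu s, g s)) + Hw w (fun s => (fv s, g s))
        - Hw w (fun s => ((fu s, fv s), g s)) - Hw w g = 0 := hcmi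
    rw [hchU, hchV, hchUV] at h1
    linarith
  have htermnn : ∀ t ∈ Finset.univ, (0:ℝ) ≤ P t * (Hw (condw w g t) fu
      + Hw (condw w g t) fv - Hw (condw w g t) (fun s => (fu s, fv s))) := by
    intro t _
    rcases eq_or_ne (P t) 0 with h0 | h0
    · rw [h0, zero_mul]
    · refine mul_nonneg (hPnn t) ?_
      have := mi_nonneg (condw w g t) (condw_nonneg hw g t) (sum_condw g t h0) fu fv
      linarith
  have hterm0 : ∀ t, P t * (Hw (condw w g t) fu + Hw (condw w g t) fv
      - Hw (condw w g t) (fun s => (fu s, fv s))) = 0 := fun t =>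
    (Finset.sum_eq_zero_iff_of_nonneg htermnn).mp hsum0 t (Finset.mem_univ t)
  -- per-t independence and the structure dichotomy
  have hstruct : ∀ t, P t ≠ 0 →
      (pushw (condw w g t) (fun s : A × A × T => zf s.1 s.2.1) 1 = 1
        ∧ Hw (condw w g t) fu + Hw (condw w g t) fv ≤ 0)
      ∨ (pushw (condw w g t) (fun s : A × A × T => zf s.1 s.2.1) 1 = 0
        ∧ Hw (condw w g t) fu + Hw (condw w g t) fv
          ≤ Real.log (((k : ℝ) ^ 2 - 1) / 4)) := by
    intro t h0
    have hbr0 : Hw (condw w g t) fu + Hw (condw w g t) fv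
        - Hw (condw w g t) (fun s => (fu s, fv s)) = 0 := by
      rcases mul_eq_zero.mp (hterm0 t) with h | h
      · exact absurd h h0
      · exact h
    have hind := mi_eq_indep (condw w g t) (condw_nonneg hw g t)
      (sum_condw g t h0) fu fv hbr0
    exact per_t hA hk hk2 (condw w g t) (condw_nonneg hw g t) (sum_condw g t h0)
      (fun u u' => hind u u')
  -- the diagonal mass is 1/k
  have hdiagmass : ∑ t, P t * pushw (condw w g t)
      (fun s : A × A × T => zf s.1 s.2.1) 1 = 1 / (k : ℝ) := by
    have hterm : ∀ t, P t * pushw (condw w g t) (fun s : A × A × T => zf s.1 s.2.1) 1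
        = ∑ s : A × A × T, if zf s.1 s.2.1 = 1 then (if g s = t then w s else 0) else 0 := by
      intro t
      unfold pushw
      rw [Finset.mul_sum]
      refine Finset.sum_congr rfl fun s _ => ?_
      rcases eq_or_ne (zf s.1 s.2.1) 1 with h | h
      · rw [if_pos h, if_pos h, P_mul_condw w hw g t s]
      · rw [if_neg h, if_neg h, mul_zero]
    rw [Finset.sum_congr rfl fun t _ => hterm t, Finset.sum_comm]
    have hpt : ∀ s : A × A × T, ∑ t, (if zf s.1 s.2.1 = 1 then (if g s = t then w s else 0) else 0)
        = if s.1 = s.2.1 then w s else 0 := by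
      intro s
      rcases eq_or_ne (zf s.1 s.2.1) 1 with h | h
      · rw [Finset.sum_congr rfl fun t (_ : t ∈ Finset.univ) => if_pos h]
        rw [Finset.sum_ite_eq Finset.univ (g s) (fun _ => w s)]
        rw [if_pos (Finset.mem_univ _), if_pos ((zf_eq_one_iff _ _).mp h)]
      · rw [Finset.sum_congr rfl fun t (_ : t ∈ Finset.univ) => if_neg h]
        rw [Finset.sum_const, smul_zero, if_neg]
        exact fun hc => h ((zf_eq_one_iff _ _).mpr hc)
    rw [Finset.sum_congr rfl fun s _ => hpt s]
    rw [Fintype.sum_prod_type]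
    have hinner : ∀ a : A, ∑ bt : A × T, (if a = (a, bt).2.1 then w (a, bt) else 0)
        = 1 / (k : ℝ) ^ 2 := by
      intro a
      rw [Fintype.sum_prod_type]
      have : ∀ b : A, ∑ t : T, (if a = (a, b, t).2.1 then w (a, b, t) else 0)
          = if a = b then 1 / (k : ℝ) ^ 2 else 0 := by
        intro b
        rcases eq_or_ne a b with h | h
        · simp only [h, if_pos rfl, if_true]
          exact hmarg b b
        · simp only [if_neg h]
          exact Finset.sum_const_zero
      rw [Finset.sum_congr rfl fun b _ => this b, Finset.sum_ite_eq Finset.univ a]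
      rw [if_pos (Finset.mem_univ a)]
    rw [Finset.sum_congr rfl fun a _ => hinner a, Finset.sum_const, Finset.card_univ, hA]
    rw [nsmul_eq_mul]
    field_simp
  have hgoal : (∑ t, P t * Hw (condw w g t) fu) + (∑ t, P t * Hw (condw w g t) fv)
      ≤ (1 - 1 / (k : ℝ)) * Real.log (((k : ℝ) ^ 2 - 1) / 4) := by
    set L := Real.log (((k : ℝ) ^ 2 - 1) / 4) with hL
    classical
    have hbd : ∀ t ∈ Finset.univ, P t * Hw (condw w g t) fu + P t * Hw (condw w g t) fv
        ≤ P t * L - (if pushw (condw w g t) (fun s : A × A × T => zf s.1 s.2.1) 1 = 1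
            ∧ P t ≠ 0 then P t else 0) * L := by
      intro t _
      rcases eq_or_ne (P t) 0 with h0 | h0
      · rw [h0]
        simp
      · rcases hstruct t h0 with ⟨he1, hb⟩ | ⟨he0, hb⟩
        · rw [if_pos ⟨he1, h0⟩]
          have h1 : P t * (Hw (condw w g t) fu + Hw (condw w g t) fv) ≤ P t * 0 :=
            mul_le_mul_of_nonneg_left hb (hPnn t)
          rw [mul_zero] at h1
          nlinarith
        · rw [if_neg (by rintro ⟨h1, _⟩; rw [he0] at h1; norm_num at h1)]
          have h1 : P t * (Hw (condw w g t) fu + Hw (condw w g t) fv) ≤ P t * L :=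
            mul_le_mul_of_nonneg_left hb (hPnn t)
          nlinarith
    have hif : ∑ t, (if pushw (condw w g t) (fun s : A × A × T => zf s.1 s.2.1) 1 = 1
        ∧ P t ≠ 0 then P t else 0) = 1 / (k : ℝ) := by
      rw [← hdiagmass]
      refine Finset.sum_congr rfl fun t _ => ?_
      rcases eq_or_ne (P t) 0 with h0 | h0
      · rw [if_neg (by rintro ⟨_, hc⟩; exact hc h0), h0, zero_mul]
      · rcases hstruct t h0 with ⟨he1, _⟩ | ⟨he0, _⟩
        · rw [if_pos ⟨he1, h0⟩, he1, mul_one]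
        · rw [if_neg (by rintro ⟨h1, _⟩; rw [he0] at h1; norm_num at h1), he0, mul_zero]
    calc (∑ t, P t * Hw (condw w g t) fu) + (∑ t, P t * Hw (condw w g t) fv)
        = ∑ t, (P t * Hw (condw w g t) fu + P t * Hw (condw w g t) fv) := by
          rw [Finset.sum_add_distrib]
      _ ≤ ∑ t, (P t * L - (if pushw (condw w g t)
            (fun s : A × A × T => zf s.1 s.2.1) 1 = 1 ∧ P t ≠ 0 then P t else 0) * L) :=
          Finset.sum_le_sum hbd
      _ = (∑ t, P t) * L - (∑ t, (if pushw (condw w g t)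
            (fun s : A × A × T => zf s.1 s.2.1) 1 = 1 ∧ P t ≠ 0 then P t else 0)) * L := by
          rw [Finset.sum_sub_distrib, Finset.sum_mul, Finset.sum_mul]
      _ = (1 - 1 / (k : ℝ)) * L := by rw [hPsum, hif]; ring
  have hgoal2 : Hw w (fun s => (fu s, g s)) - Hw w g
      + (Hw w (fun s => (fv s, g s)) - Hw w g)
      ≤ (1 - 1 / (k : ℝ)) * Real.log (((k : ℝ) ^ 2 - 1) / 4) := by
    rw [hchU, hchV]
    have h := hgoal
    linarith
  exact hgoal2
end main

open MeasureTheory ProbabilityTheory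
open scoped ENNReal

section bridge
variable {Ω : Type*} [MeasurableSpace Ω] (μ : Measure Ω) [IsProbabilityMeasure μ]
variable {S S' : Type*} [Fintype S] [MeasurableSpace S] [MeasurableSingletonClass S]
  [Fintype S'] [DecidableEq S']

lemma pm_comp (W : Ω → S) (hW : Measurable W) (h : S → S') (s' : S') :
    pm μ (fun ω => h (W ω)) s' = pushw (pm μ W) h s' := by
  unfold pm pushw
  have hset : (fun ω => h (W ω)) ⁻¹' {s'}
      = ⋃ s ∈ (Finset.univ.filter (fun s : S => h s = s') : Finset S), W ⁻¹' {s} := by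
    ext ω
    simp only [Set.mem_preimage, Set.mem_singleton_iff, Set.mem_iUnion,
      Finset.mem_filter, Finset.mem_univ, true_and]
    constructor
    · intro hω
      exact ⟨W ω, hω, rfl⟩
    · rintro ⟨s, hs, hws⟩
      rw [hws, hs]
  rw [hset, measure_biUnion_finset ?_ (fun s _ => hW (measurableSet_singleton s))]
  · rw [ENNReal.toReal_sum (fun s _ => measure_ne_top μ _)]
    rw [Finset.sum_filter]
  · intro a _ b _ hab
    refine Set.disjoint_left.mpr fun ω hωa hωb => ?_
    rw [Set.mem_preimage, Set.mem_singleton_iff] at hωa hωb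
    exact hab (hωa.symm.trans hωb)

lemma entH_comp (W : Ω → S) (hW : Measurable W) (h : S → S') :
    entH μ (fun ω => h (W ω)) = Hw (pm μ W) h := by
  unfold entH Hw
  exact Finset.sum_congr rfl fun s' _ => by rw [pm_comp μ W hW h s']

lemma pm_nonneg (W : Ω → S) (s : S) : 0 ≤ pm μ W s := ENNReal.toReal_nonneg

lemma sum_pm (W : Ω → S) (hW : Measurable W) : ∑ s, pm μ W s = 1 := by
  have h := pm_comp μ W hW (fun _ => (() : Unit)) ()
  have h1 : pm μ (fun _ : Ω => (() : Unit)) () = 1 := by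
    unfold pm
    rw [show (fun _ : Ω => (() : Unit)) ⁻¹' {()} = Set.univ from by ext; simp]
    simp
  rw [h1] at h
  unfold pushw at h
  simpa using h.symm
end bridge

/-- `k`-ary EQ, `k` odd: with `U = (X,Z)`, `V = (Y,Z)`, every finite-valued `Q` with
`I(U ; V | Q) = 0` satisfies `H(U|Q) + H(V|Q) ≤ (1 − 1/k) log ((k² − 1)/4)`. -/
theorem odd_k_EQ_wyner_upper_bound
    {Ω : Type*} [MeasurableSpace Ω] (μ : Measure Ω) [IsProbabilityMeasure μ]
    (k : ℕ) (hk : Odd k) (hk2 : 3 ≤ k)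
    {A : Type*} [Fintype A] [DecidableEq A]
    [MeasurableSpace A] [MeasurableSingletonClass A] (hA : Fintype.card A = k)
    (X Y : Ω → A) (hX : Measurable X) (hY : Measurable Y)
    (hindep : IndepFun X Y μ)
    (hXunif : ∀ a : A, μ (X ⁻¹' {a}) = (k : ℝ≥0∞)⁻¹)
    (hYunif : ∀ a : A, μ (Y ⁻¹' {a}) = (k : ℝ≥0∞)⁻¹)
    (Z : Ω → Fin 2) (hZ : Z = fun ω => if X ω = Y ω then 1 else 0)
    {T : Type*} [Fintype T] [MeasurableSpace T] [MeasurableSingletonClass T]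
    (Q : Ω → T) (hQ : Measurable Q)
    (hQci : condMutInf μ (fun ω => (X ω, Z ω)) (fun ω => (Y ω, Z ω)) Q = 0) :
    condEnt μ (fun ω => (X ω, Z ω)) Q + condEnt μ (fun ω => (Y ω, Z ω)) Q
      ≤ (1 - 1 / (k : ℝ)) * Real.log (((k : ℝ) ^ 2 - 1) / 4) := by
  classical
  subst hZ
  set W : Ω → A × A × T := fun ω => (X ω, Y ω, Q ω) with hWdef
  have hWm : Measurable W := hX.prodMk (hY.prodMk hQ)
  have hkne : (k : ℝ) ≠ 0 := Nat.cast_ne_zero.mpr (by omega)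
  -- uniform product marginal
  have hmarg : ∀ a b : A, ∑ t, pm μ W (a, b, t) = 1 / (k : ℝ) ^ 2 := by
    intro a b
    have h1 : pm μ (fun ω => ((W ω).1, (W ω).2.1)) (a, b)
        = pushw (pm μ W) (fun s : A × A × T => (s.1, s.2.1)) (a, b) :=
      pm_comp μ W hWm (fun s : A × A × T => (s.1, s.2.1)) (a, b)
    have h2 : pm μ (fun ω => ((W ω).1, (W ω).2.1)) (a, b) = 1 / (k : ℝ) ^ 2 := by
      unfold pm
      have hpre : (fun ω => ((W ω).1, (W ω).2.1)) ⁻¹' {(a, b)}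
          = X ⁻¹' {a} ∩ Y ⁻¹' {b} := by
        ext ω
        simp [hWdef, Prod.ext_iff]
      rw [hpre, hindep.measure_inter_preimage_eq_mul {a} {b}
        (measurableSet_singleton a) (measurableSet_singleton b), hXunif a, hYunif b]
      rw [ENNReal.toReal_mul, ENNReal.toReal_inv, ENNReal.toReal_natCast]
      field_simp
    have h3 : pushw (pm μ W) (fun s : A × A × T => (s.1, s.2.1)) (a, b)
        = ∑ t, pm μ W (a, b, t) := by
      unfold pushw
      have expand : (∑ s : A × A × T, if (s.1, s.2.1) = (a, b) then pm μ W s else 0)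
          = ∑ x : A, ∑ y : A, ∑ t : T, if x = a ∧ y = b then pm μ W (x, y, t) else 0 := by
        rw [Fintype.sum_prod_type]
        refine Finset.sum_congr rfl fun x _ => ?_
        rw [Fintype.sum_prod_type]
        refine Finset.sum_congr rfl fun y _ => Finset.sum_congr rfl fun t _ => ?_
        by_cases hx : x = a <;> by_cases hy : y = b <;> simp [hx, hy]
      rw [expand]
      have step : ∀ x : A, (∑ y : A, ∑ t : T, if x = a ∧ y = b then pm μ W (x, y, t) else 0)
          = if x = a then (∑ t, pm μ W (x, b, t)) else 0 := by
        intro x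
        by_cases hx : x = a
        · simp only [hx, true_and, if_true]
          have hy : ∀ y : A, (∑ t : T, if y = b then pm μ W (a, y, t) else 0)
              = if y = b then (∑ t, pm μ W (a, y, t)) else 0 := fun y => by
            split_ifs <;> simp
          rw [Finset.sum_congr rfl fun y _ => hy y, Finset.sum_ite_eq' Finset.univ b
            (fun y => ∑ t, pm μ W (a, y, t)), if_pos (Finset.mem_univ b)]
        · simp [hx]
      rw [Finset.sum_congr rfl fun x _ => step x, Finset.sum_ite_eq' Finset.univ a
        (fun x => ∑ t, pm μ W (x, b, t)), if_pos (Finset.mem_univ a)]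
    rw [← h3, ← h1, h2]
  -- entropy identifications
  have e1 : entH μ (fun ω => ((X ω, if X ω = Y ω then (1 : Fin 2) else 0), Q ω))
      = Hw (pm μ W) (fun s : A × A × T => ((s.1, zf s.1 s.2.1), s.2.2)) :=
    entH_comp μ W hWm (fun s : A × A × T => ((s.1, zf s.1 s.2.1), s.2.2))
  have e2 : entH μ (fun ω => ((Y ω, if X ω = Y ω then (1 : Fin 2) else 0), Q ω))
      = Hw (pm μ W) (fun s : A × A × T => ((s.2.1, zf s.1 s.2.1), s.2.2)) :=
    entH_comp μ W hWm (fun s : A × A × T => ((s.2.1, zf s.1 s.2.1), s.2.2))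
  have e3 : entH μ (fun ω => (((X ω, if X ω = Y ω then (1 : Fin 2) else 0),
        (Y ω, if X ω = Y ω then (1 : Fin 2) else 0)), Q ω))
      = Hw (pm μ W) (fun s : A × A × T =>
          (((s.1, zf s.1 s.2.1), (s.2.1, zf s.1 s.2.1)), s.2.2)) :=
    entH_comp μ W hWm (fun s : A × A × T =>
      (((s.1, zf s.1 s.2.1), (s.2.1, zf s.1 s.2.1)), s.2.2))
  have e4 : entH μ Q = Hw (pm μ W) (fun s : A × A × T => s.2.2) :=
    entH_comp μ W hWm (fun s : A × A × T => s.2.2)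
  have hcmi : Hw (pm μ W) (fun s : A × A × T => ((s.1, zf s.1 s.2.1), s.2.2))
      + Hw (pm μ W) (fun s : A × A × T => ((s.2.1, zf s.1 s.2.1), s.2.2))
      - Hw (pm μ W) (fun s : A × A × T =>
          (((s.1, zf s.1 s.2.1), (s.2.1, zf s.1 s.2.1)), s.2.2))
      - Hw (pm μ W) (fun s : A × A × T => s.2.2) = 0 := by
    rw [← e1, ← e2, ← e3, ← e4]
    exact hQci
  have main := pure_main hA hk hk2 (pm μ W) (fun s => pm_nonneg μ W s)
    (sum_pm μ W hWm) hmarg hcmi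
  show entH μ (fun ω => ((X ω, if X ω = Y ω then (1 : Fin 2) else 0), Q ω)) - entH μ Q
      + (entH μ (fun ω => ((Y ω, if X ω = Y ω then (1 : Fin 2) else 0), Q ω)) - entH μ Q)
      ≤ (1 - 1 / (k : ℝ)) * Real.log (((k : ℝ) ^ 2 - 1) / 4)
  rw [e1, e2, e4]
  exact main
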